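/- For every matrix M ∈ GL(2,ℤ) there is exactly one canonical word w ∈ Σ* such that φ(w) = M. -/

import Mathlib

/-- 2×2 integer matrices. -/
abbrev M2 := Matrix (Fin 2) (Fin 2) ℤ

/-- A matrix belongs to GL(2,ℤ), i.e. has determinant ±1. -/
def IsGL (A : M2) : Prop := A.det = 1 ∨ A.det = -1

/-- The four-letter alphabet Σ = {X, N, S, R}. -/
inductive Alph : Type | X | N | S | R
deriving DecidableEq

instance instFintypeAlph : Fintype Alph where
  elems := {Alph.X, Alph.N, Alph.S, Alph.R}
  complete := by intro x; cases x <;> simp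

/-- The matrices assigned to letters of Σ. -/
def phiLetter : Alph → M2
  | Alph.X => !![-1, 0; 0, -1]
  | Alph.N => !![1, 0; 0, -1]
  | Alph.S => !![0, -1; 1, 0]
  | Alph.R => !![0, -1; 1, 1]

/-- The monoid homomorphism φ : Σ* → GL(2,ℤ) (valued in matrices). -/
def phi (w : List Alph) : M2 := (w.map phiLetter).prod

/-- A word over Σ is canonical: no subword SS or RRR, the letter N occurs only in
the first position, and X occurs only in the first position or immediately after N. -/
def Canonical (w : List Alph) : Prop :=
  ¬ [Alph.S, Alph.S] <:+: w ∧
  ¬ [Alph.R, Alph.R, Alph.R] <:+: w ∧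
  (∀ i : Fin w.length, w.get i = Alph.N → (i : ℕ) = 0) ∧
  (∀ i : Fin w.length, w.get i = Alph.X →
      (i : ℕ) = 0 ∨ ((i : ℕ) = 1 ∧ w.get ⟨0, Nat.lt_of_le_of_lt (Nat.zero_le _) i.isLt⟩ = Alph.N))

/-- A subset of GL(2,ℤ) is regular if it is the image under φ of a regular language. -/
def RegularSubset (S : Set M2) : Prop :=
  ∃ L : Language Alph, L.IsRegular ∧ phi '' L = S

namespace CanProof
open Alph

def Nm : M2 := !![1, 0; 0, -1]
def Sm : M2 := !![0, -1; 1, 0]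
def Rm : M2 := !![0, -1; 1, 1]
def Tm : M2 := !![1, 1; 0, 1]
def Lm : M2 := !![1, 0; 1, 1]

lemma phi_nil : phi [] = 1 := rfl
lemma phi_cons (l : Alph) (w : List Alph) : phi (l :: w) = phiLetter l * phi w := by
  simp [phi]
lemma phi_append (u v : List Alph) : phi (u ++ v) = phi u * phi v := by
  simp [phi]

lemma phiX : phiLetter X = (-1 : M2) := by
  show !![(-1:ℤ),0;0,-1] = -1
  ext i j; fin_cases i <;> fin_cases j <;> simp [Matrix.one_apply]
lemma phiN : phiLetter N = Nm := rfl
lemma phiS : phiLetter S = Sm := rfl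
lemma phiR : phiLetter R = Rm := rfl

lemma SS : Sm * Sm = -1 := by
  show (!![0,-1;1,0] : M2) * !![0,-1;1,0] = -1
  norm_num [Matrix.mul_fin_two]
  ext i j; fin_cases i <;> fin_cases j <;> simp [Matrix.one_apply]
lemma RRR : Rm * Rm * Rm = -1 := by
  show (!![0,-1;1,1] : M2) * !![0,-1;1,1] * !![0,-1;1,1] = -1
  norm_num [Matrix.mul_fin_two]
  ext i j; fin_cases i <;> fin_cases j <;> simp [Matrix.one_apply]
lemma SR : Sm * Rm = -Tm := by
  show (!![0,-1;1,0] : M2) * !![0,-1;1,1] = -(!![1,1;0,1]:M2)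
  norm_num [Matrix.mul_fin_two]
lemma SRR : Sm * (Rm * Rm) = -Lm := by
  show (!![0,-1;1,0] : M2) * (!![0,-1;1,1] * !![0,-1;1,1]) = -(!![1,0;1,1]:M2)
  norm_num [Matrix.mul_fin_two]
lemma TR : Tm * Rm = Lm := by
  show (!![1,1;0,1] : M2) * !![0,-1;1,1] = !![1,0;1,1]
  norm_num [Matrix.mul_fin_two]
lemma LR : Lm * Rm = Sm := by
  show (!![1,0;1,1] : M2) * !![0,-1;1,1] = !![0,-1;1,0]
  norm_num [Matrix.mul_fin_two]
lemma NN : Nm * Nm = 1 := by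
  show (!![1,0;0,-1] : M2) * !![1,0;0,-1] = 1
  norm_num [Matrix.mul_fin_two]
  ext i j; fin_cases i <;> fin_cases j <;> simp [Matrix.one_apply]

/-- matrix of a block letter: false ↦ T, true ↦ L -/
def bmat (b : Bool) : M2 := if b then Lm else Tm

def Wm (bs : List Bool) : M2 := (bs.map bmat).prod

lemma Wm_nil : Wm [] = 1 := rfl
lemma Wm_cons (b : Bool) (bs : List Bool) : Wm (b :: bs) = bmat b * Wm bs := by simp [Wm]
lemma Wm_append (u v : List Bool) : Wm (u ++ v) = Wm u * Wm v := by simp [Wm]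

/-- positivity structure of block-matrix products -/
def Pos (M : M2) : Prop :=
  1 ≤ M 0 0 ∧ 0 ≤ M 0 1 ∧ 0 ≤ M 1 0 ∧ 1 ≤ M 1 1 ∧ M 0 0 * M 1 1 - M 0 1 * M 1 0 = 1

lemma pos_Wm (bs : List Bool) : Pos (Wm bs) := by
  induction bs with
  | nil =>
    refine ⟨?_, ?_, ?_, ?_, ?_⟩ <;> simp [Wm_nil, Matrix.one_apply]
  | cons b bs ih =>
    obtain ⟨h1, h2, h3, h4, h5⟩ := ih
    rw [Wm_cons]
    rw [Matrix.eta_fin_two (Wm bs)] at *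
    cases b <;>
      simp [bmat, Tm, Lm, Matrix.mul_fin_two] <;>
      refine ⟨?_, ?_, ?_, ?_, ?_⟩ <;>
      simp at * <;>
      nlinarith [h1, h2, h3, h4, h5]

lemma Tm_inv : (!![1,-1;0,1] : M2) * Tm = 1 := by
  show (!![1,-1;0,1] : M2) * !![1,1;0,1] = 1
  norm_num [Matrix.mul_fin_two]
  ext i j; fin_cases i <;> fin_cases j <;> simp [Matrix.one_apply]

lemma Lm_inv : (!![1,0;-1,1] : M2) * Lm = 1 := by
  show (!![1,0;-1,1] : M2) * !![1,0;1,1] = 1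
  norm_num [Matrix.mul_fin_two]
  ext i j; fin_cases i <;> fin_cases j <;> simp [Matrix.one_apply]

lemma Tm_cancel {A B : M2} (h : Tm * A = Tm * B) : A = B := by
  calc A = (!![1,-1;0,1] * Tm) * A := by rw [Tm_inv, Matrix.one_mul]
  _ = !![1,-1;0,1] * (Tm * B) := by rw [Matrix.mul_assoc, h]
  _ = (!![1,-1;0,1] * Tm) * B := by rw [Matrix.mul_assoc]
  _ = B := by rw [Tm_inv, Matrix.one_mul]

lemma Lm_cancel {A B : M2} (h : Lm * A = Lm * B) : A = B := by
  calc A = (!![1,0;-1,1] * Lm) * A := by rw [Lm_inv, Matrix.one_mul]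
  _ = !![1,0;-1,1] * (Lm * B) := by rw [Matrix.mul_assoc, h]
  _ = (!![1,0;-1,1] * Lm) * B := by rw [Matrix.mul_assoc]
  _ = B := by rw [Lm_inv, Matrix.one_mul]

lemma Wm_inj : ∀ bs bs' : List Bool, Wm bs = Wm bs' → bs = bs' := by
  intro bs
  induction bs with
  | nil =>
    intro bs' h
    cases bs' with
    | nil => rfl
    | cons b' t' =>
      exfalso
      obtain ⟨h1, h2, h3, h4, h5⟩ := pos_Wm t'
      rw [Wm_nil, Wm_cons, Matrix.eta_fin_two (Wm t')] at h
      have h00 := congrFun (congrFun h 0) 0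
      have h01 := congrFun (congrFun h 0) 1
      have h10 := congrFun (congrFun h 1) 0
      have h11 := congrFun (congrFun h 1) 1
      cases b' <;>
        simp [bmat, Tm, Lm, Matrix.mul_fin_two, Matrix.one_apply] at h00 h01 h10 h11 <;>
        omega
  | cons b t ih =>
    intro bs' h
    cases bs' with
    | nil =>
      exfalso
      obtain ⟨h1, h2, h3, h4, h5⟩ := pos_Wm t
      rw [Wm_nil, Wm_cons, Matrix.eta_fin_two (Wm t)] at h
      have h00 := congrFun (congrFun h 0) 0
      have h01 := congrFun (congrFun h 0) 1
      have h10 := congrFun (congrFun h 1) 0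
      have h11 := congrFun (congrFun h 1) 1
      cases b <;>
        simp [bmat, Tm, Lm, Matrix.mul_fin_two, Matrix.one_apply] at h00 h01 h10 h11 <;>
        omega
    | cons b' t' =>
      rw [Wm_cons, Wm_cons] at h
      have hbb : b = b' := by
        by_contra hne
        obtain ⟨h1, h2, h3, h4, h5⟩ := pos_Wm t
        obtain ⟨h1', h2', h3', h4', h5'⟩ := pos_Wm t'
        rw [Matrix.eta_fin_two (Wm t), Matrix.eta_fin_two (Wm t')] at h
        have h00 := congrFun (congrFun h 0) 0
        have h01 := congrFun (congrFun h 0) 1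
        have h10 := congrFun (congrFun h 1) 0
        have h11 := congrFun (congrFun h 1) 1
        cases b <;> cases b' <;>
          first
          | exact absurd rfl hne
          | (simp [bmat, Tm, Lm, Matrix.mul_fin_two] at h00 h01 h10 h11
             nlinarith [h1, h2, h3, h4, h5, h1', h2', h3', h4', h5'])
      subst hbb
      have : Wm t = Wm t' := by
        cases b <;> simp [bmat] at h
        · exact Tm_cancel h
        · exact Lm_cancel h
      rw [ih _ this]

/-- the core word R^a (SR^{b_1+1})(SR^{b_2+1})... S^e -/
def mkCore : ℕ → List Bool → Bool → List Alph
  | a+1, bs, e => R :: mkCore a bs e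
  | 0, b :: bs, e => S :: mkCore (if b then 2 else 1) bs e
  | 0, [], e => if e then [S] else []
  termination_by a bs _ => (bs.length, a)

def canWord (d g : Bool) (a : ℕ) (bs : List Bool) (e : Bool) : List Alph :=
  (if d then [N] else []) ++ (if g then [X] else []) ++ mkCore a bs e

def Se (e : Bool) : M2 := if e then Sm else 1
def sg (g : Bool) : M2 := if g then -1 else 1

lemma sg_mul_sg (g h : Bool) : sg g * sg h = sg (xor g h) := by
  cases g <;> cases h <;> simp [sg]

lemma sg_comm (g : Bool) (A : M2) : sg g * A = A * sg g := by
  cases g <;> simp [sg]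

lemma mkCore_succ (a : ℕ) (bs : List Bool) (e : Bool) :
    mkCore (a+1) bs e = R :: mkCore a bs e := by rw [mkCore]
lemma mkCore_zero_cons (b : Bool) (bs : List Bool) (e : Bool) :
    mkCore 0 (b :: bs) e = S :: mkCore (if b then 2 else 1) bs e := by
  rw [mkCore]
lemma mkCore_nil (e : Bool) : mkCore 0 [] e = if e then [S] else [] := by rw [mkCore]

lemma phi_mkCore_pow (a : ℕ) (bs : List Bool) (e : Bool) :
    phi (mkCore a bs e) = Rm ^ a * phi (mkCore 0 bs e) := by
  induction a with
  | zero => rw [pow_zero, Matrix.one_mul]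
  | succ a ih =>
    rw [mkCore_succ, phi_cons, phiR, ih, pow_succ', Matrix.mul_assoc]

lemma phi_mkCore_zero (bs : List Bool) (e : Bool) :
    phi (mkCore 0 bs e) = sg (decide (bs.length % 2 = 1)) * (Wm bs * Se e) := by
  induction bs with
  | nil => cases e <;> simp [mkCore_nil, sg, Se, Wm_nil, phi_nil, phi_cons, phiS]
  | cons b bs ih =>
    rw [mkCore_zero_cons, phi_cons, phiS, phi_mkCore_pow, ih]
    have hx : Sm * Rm ^ (if b then 2 else 1) = sg true * bmat b := by
      cases b
      · simp only [Bool.false_eq_true, if_false, pow_one, sg, bmat, if_true]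
        rw [SR, neg_one_mul]
      · simp only [if_true, sg, bmat]
        rw [pow_two, SRR, neg_one_mul]
    have hpar : (decide ((b :: bs).length % 2 = 1)) = xor true (decide (bs.length % 2 = 1)) := by
      by_cases h : bs.length % 2 = 1 <;>
        simp [List.length_cons, h, Nat.add_mod] <;> omega
    rw [← Matrix.mul_assoc, hx, Wm_cons, hpar, ← sg_mul_sg]
    cases h : decide (bs.length % 2 = 1) <;>
      simp [h, sg, Matrix.mul_assoc, Matrix.neg_mul, Matrix.mul_neg]

lemma phi_mkCore (a : ℕ) (bs : List Bool) (e : Bool) :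
    phi (mkCore a bs e) = Rm ^ a * (sg (decide (bs.length % 2 = 1)) * (Wm bs * Se e)) := by
  rw [phi_mkCore_pow, phi_mkCore_zero]

lemma sg_true_mat : sg true = !![-1,0;0,-1] := by
  show (-1 : M2) = _
  ext i j; fin_cases i <;> fin_cases j <;> simp [Matrix.one_apply]
lemma sg_false_mat : sg false = !![1,0;0,1] := by
  show (1 : M2) = _
  rw [Matrix.one_fin_two]
lemma Se_true_mat : Se true = !![0,-1;1,0] := rfl
lemma Se_false_mat : Se false = !![1,0;0,1] := by
  show (1 : M2) = _
  rw [Matrix.one_fin_two]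

set_option maxHeartbeats 1000000 in
lemma inj_main (g g' e e' : Bool) (a a' : ℕ) (ha : a ≤ 2) (ha' : a' ≤ 2)
    (bs bs' : List Bool)
    (h : sg g * (Rm ^ a * (Wm bs * Se e)) = sg g' * (Rm ^ a' * (Wm bs' * Se e'))) :
    g = g' ∧ a = a' ∧ bs = bs' ∧ e = e' := by
  obtain ⟨p, q, r, s, hW⟩ : ∃ p q r s, Wm bs = !![p,q;r,s] := ⟨_,_,_,_, Matrix.eta_fin_two _⟩
  obtain ⟨p', q', r', s', hW'⟩ : ∃ p q r s, Wm bs' = !![p,q;r,s] := ⟨_,_,_,_, Matrix.eta_fin_two _⟩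
  have hP := pos_Wm bs
  have hP' := pos_Wm bs'
  rw [hW] at h hP
  rw [hW'] at h hP'
  obtain ⟨h1, h2, h3, h4, h5⟩ := hP
  obtain ⟨h1', h2', h3', h4', h5'⟩ := hP'
  simp only [Matrix.cons_val', Matrix.cons_val_zero, Matrix.cons_val_one, Matrix.head_cons,
    Matrix.empty_val', Matrix.cons_val_fin_one, Matrix.of_apply, Matrix.head_fin_const] at h1 h2 h3 h4 h5 h1' h2' h3' h4' h5'
  interval_cases a <;> interval_cases a' <;> cases g <;> cases g' <;> cases e <;> cases e' <;>
    (simp only [sg_true_mat, sg_false_mat, Se_true_mat, Se_false_mat, Rm,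
       pow_zero, pow_one, pow_two, Matrix.one_fin_two, Matrix.mul_fin_two] at h
     rw [← Matrix.ext_iff] at h
     simp only [Fin.forall_fin_two, Matrix.cons_val', Matrix.cons_val_zero,
       Matrix.cons_val_one, Matrix.head_cons, Matrix.empty_val',
       Matrix.cons_val_fin_one, Matrix.of_apply, Matrix.head_fin_const] at h
     first
     | (exfalso; omega)
     | (obtain ⟨e1, e2, e3, e4⟩ : p = p' ∧ q = q' ∧ r = r' ∧ s = s' := by omega
        refine ⟨rfl, rfl, Wm_inj _ _ ?_, rfl⟩
        rw [hW, hW', e1, e2, e3, e4]))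

/-- reachable canonical matrix classes -/
def ClassC (M : M2) : Prop :=
  ∃ (g : Bool) (a : ℕ) (bs : List Bool) (e : Bool),
    a ≤ 2 ∧ M = sg g * (Rm ^ a * (Wm bs * Se e))

lemma classC_one : ClassC 1 := by
  refine ⟨false, 0, [], false, by norm_num, ?_⟩
  simp [sg, Se, Wm_nil]

lemma neg_sg (g : Bool) (A : M2) : -(sg g * A) = sg (!g) * A := by
  cases g <;> simp [sg]

lemma classC_mul_X {M : M2} (h : ClassC M) : ClassC (M * phiLetter X) := by
  obtain ⟨g, a, bs, e, ha, rfl⟩ := h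
  refine ⟨!g, a, bs, e, ha, ?_⟩
  rw [phiX, Matrix.mul_neg, Matrix.mul_one, neg_sg]

lemma classC_mul_S {M : M2} (h : ClassC M) : ClassC (M * phiLetter S) := by
  obtain ⟨g, a, bs, e, ha, rfl⟩ := h
  cases e with
  | false =>
    refine ⟨g, a, bs, true, ha, ?_⟩
    simp [Se, phiS, Matrix.mul_assoc]
  | true =>
    refine ⟨!g, a, bs, false, ha, ?_⟩
    simp only [Se, if_true, if_false, phiS, Matrix.mul_assoc, Matrix.mul_one]
    rw [SS, ← neg_sg]
    simp [Matrix.mul_neg, Matrix.neg_mul]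

lemma classC_mul_R {M : M2} (h : ClassC M) : ClassC (M * phiLetter R) := by
  obtain ⟨g, a, bs, e, ha, rfl⟩ := h
  cases e with
  | true =>
    -- W * S * R = W * (-T) = -(W*T)
    refine ⟨!g, a, bs ++ [false], false, ha, ?_⟩
    simp only [Se, if_true, if_false, phiR, Matrix.mul_assoc, Matrix.mul_one]
    rw [SR, Wm_append]
    simp only [Wm_cons, Wm_nil, bmat, if_false, Matrix.mul_one]
    rw [← neg_sg]
    simp [Matrix.mul_neg, Matrix.neg_mul, Matrix.mul_assoc]
  | false =>
    rcases List.eq_nil_or_concat bs with rfl | ⟨u, b, rfl⟩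
    · -- M = sg g * Rm^a
      match a, ha with
      | 0, _ =>
        exact ⟨g, 1, [], false, by norm_num, by
          simp [Se, Wm_nil, phiR, Matrix.mul_assoc, Matrix.mul_one, pow_one]⟩
      | 1, _ =>
        exact ⟨g, 2, [], false, by norm_num, by
          simp [Se, Wm_nil, phiR, Matrix.mul_assoc, Matrix.mul_one, pow_one, pow_two]⟩
      | 2, _ =>
        refine ⟨!g, 0, [], false, by norm_num, ?_⟩
        calc sg g * (Rm ^ 2 * (Wm [] * Se false)) * phiLetter R
            = sg g * (Rm * (Rm * Rm)) := by
              simp [Se, Wm_nil, pow_two, phiR, Matrix.mul_assoc]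
          _ = sg g * (-1) := by
              rw [show Rm * (Rm * Rm) = -1 from by rw [← Matrix.mul_assoc, RRR]]
          _ = sg (!g) * (Rm ^ 0 * (Wm [] * Se false)) := by
              cases g <;> simp [sg, Se, Wm_nil]
    · cases b with
      | false =>
        -- ... T * R = L
        refine ⟨g, a, u ++ [true], false, ha, ?_⟩
        simp only [Se, phiR, Bool.false_eq_true, if_false, if_true, List.concat_eq_append,
          Wm_append, Wm_cons, Wm_nil, bmat, Matrix.mul_one, Matrix.one_mul,
          Matrix.mul_assoc, TR]
      | true =>
        -- ... L * R = S
        refine ⟨g, a, u, true, ha, ?_⟩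
        simp only [Se, phiR, Bool.false_eq_true, if_false, if_true, List.concat_eq_append,
          Wm_append, Wm_cons, Wm_nil, bmat, Matrix.mul_one, Matrix.one_mul,
          Matrix.mul_assoc, LR]

lemma classC_word : ∀ w : List Alph, Alph.N ∉ w → ClassC (phi w) := by
  intro w
  induction w using List.reverseRecOn with
  | nil => intro _; exact classC_one
  | append_singleton u l ih =>
    intro hN
    rw [phi_append]
    have hu : Alph.N ∉ u := fun h => hN (List.mem_append_left _ h)
    have hl : l ≠ Alph.N := fun h => hN (by simp [h])
    have hcu := ih hu
    cases l with
    | N => exact absurd rfl hl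
    | X => simpa [phi_cons, phi_nil, Matrix.mul_one] using classC_mul_X hcu
    | S => simpa [phi_cons, phi_nil, Matrix.mul_one] using classC_mul_S hcu
    | R => simpa [phi_cons, phi_nil, Matrix.mul_one] using classC_mul_R hcu

def Tmat (n : ℤ) : M2 := !![1, n; 0, 1]

lemma Tmat_mul (m n : ℤ) : Tmat m * Tmat n = Tmat (m + n) := by
  ext i j; fin_cases i <;> fin_cases j <;> simp [Tmat, Matrix.mul_fin_two] <;> ring

def wpos : ℕ → List Alph
  | 0 => []
  | n+1 => X :: S :: R :: wpos n

def wneg : ℕ → List Alph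
  | 0 => []
  | n+1 => X :: R :: R :: S :: wneg n

lemma phi_wpos (n : ℕ) : phi (wpos n) = Tmat n := by
  induction n with
  | zero => simp [wpos, phi_nil, Tmat]; rw [Matrix.one_fin_two]
  | succ n ih =>
    rw [wpos, phi_cons, phi_cons, phi_cons, ih, phiX, phiS, phiR]
    rw [← Matrix.mul_assoc Sm, SR]
    have h2 : (-1 : M2) * (-Tm * Tmat n) = Tm * Tmat n := by
      simp [Matrix.neg_mul]
    rw [h2]
    have hT : Tm = Tmat 1 := rfl
    rw [hT, Tmat_mul]
    congr 1
    push_cast; ring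

lemma phi_wneg (n : ℕ) : phi (wneg n) = Tmat (-n) := by
  induction n with
  | zero => simp [wneg, phi_nil, Tmat]; rw [Matrix.one_fin_two]
  | succ n ih =>
    rw [wneg, phi_cons, phi_cons, phi_cons, phi_cons, ih, phiX, phiS, phiR]
    have hRRS : Rm * (Rm * Sm) = -Tmat (-1) := by
      show (!![0,-1;1,1] : M2) * ((!![0,-1;1,1] : M2) * !![0,-1;1,0]) = -(!![1,-1;0,1] : M2)
      norm_num [Matrix.mul_fin_two]
    calc (-1 : M2) * (Rm * (Rm * (Sm * Tmat (-↑n))))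
        = (-(Rm * (Rm * Sm))) * Tmat (-↑n) := by
          simp [Matrix.neg_mul, Matrix.mul_assoc]
      _ = Tmat (-1) * Tmat (-↑n) := by rw [hRRS, neg_neg]
      _ = Tmat (-↑(n+1)) := by rw [Tmat_mul]; congr 1; push_cast; ring

def wordT (n : ℤ) : List Alph := if 0 ≤ n then wpos n.toNat else wneg (-n).toNat

lemma phi_wordT (n : ℤ) : phi (wordT n) = Tmat n := by
  unfold wordT
  by_cases h : 0 ≤ n
  · rw [if_pos h, phi_wpos, Int.toNat_of_nonneg h]
  · have h2 : (-(((-n).toNat : ℤ))) = n := by omega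
    rw [if_neg h, phi_wneg, h2]

lemma N_not_mem_wordT (n : ℤ) : Alph.N ∉ wordT n := by
  unfold wordT
  by_cases h : 0 ≤ n <;> simp [h]
  · generalize n.toNat = m
    induction m with
    | zero => simp [wpos]
    | succ k ih => simp [wpos, ih]
  · generalize (-n).toNat = m
    induction m with
    | zero => simp [wneg]
    | succ k ih => simp [wneg, ih]

lemma Sm_inv : (-Sm) * Sm = 1 := by
  rw [Matrix.neg_mul, SS, neg_neg]

lemma exists_word_det_one : ∀ n : ℕ, ∀ A : M2, A.det = 1 → (A 1 0).natAbs = n →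
    ∃ w : List Alph, Alph.N ∉ w ∧ phi w = A := by
  intro n
  induction n using Nat.strong_induction_on with
  | _ n ih =>
    intro A hdet hn
    have hA : A = !![A 0 0, A 0 1; A 1 0, A 1 1] := Matrix.eta_fin_two A
    rw [hA, Matrix.det_fin_two_of] at hdet
    by_cases hc : A 1 0 = 0
    · -- upper triangular
      rw [hc] at hdet
      simp only [mul_zero, sub_zero] at hdet
      rcases Int.mul_eq_one_iff_eq_one_or_neg_one.mp hdet with ⟨h1, h2⟩ | ⟨h1, h2⟩
      · refine ⟨wordT (A 0 1), N_not_mem_wordT _, ?_⟩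
        rw [phi_wordT, hA, hc, h1, h2]; rfl
      · refine ⟨X :: wordT (-(A 0 1)), ?_, ?_⟩
        · simp [N_not_mem_wordT]
        · rw [phi_cons, phiX, phi_wordT, hA, hc, h1, h2]
          ext i j; fin_cases i <;> fin_cases j <;> simp [Tmat]
    · -- Euclid step
      set a := A 0 0 with ha0
      set b := A 0 1
      set c := A 1 0
      set d := A 1 1
      set k : ℤ := -(a / c) with hk
      set B : M2 := !![-c, -d; a + k*c, b + k*d] with hB
      have hBdet : B.det = 1 := by
        rw [hB, Matrix.det_fin_two_of]
        ring_nf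
        nlinarith [hdet]
      have hBsmall : (B 1 0).natAbs < n := by
        have : B 1 0 = a + k*c := by rw [hB]; rfl
        rw [this, hk]
        have := Int.emod_emod_of_dvd a (dvd_refl c)
        have h1 : a + -(a / c) * c = a % c := by
          rw [Int.emod_def]; ring
        rw [h1, ← hn]
        rcases Int.lt_or_lt_of_ne hc with h | h
        · have h1 := Int.emod_nonneg a hc
          have h2 := Int.emod_lt_of_pos a (show (0:ℤ) < -c by omega)
          have h3 : a % -(-c) = a % (-c) := Int.emod_neg a (-c)
          simp only [neg_neg] at h3
          omega
        · have := Int.emod_nonneg a hc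
          have := Int.emod_lt_of_pos a h
          omega
      obtain ⟨wB, hwBN, hwB⟩ := ih _ hBsmall B hBdet rfl
      refine ⟨wordT (-k) ++ (X :: S :: wB), ?_, ?_⟩
      · intro hmem
        rcases List.mem_append.mp hmem with h | h
        · exact N_not_mem_wordT _ h
        · simp at h
          exact hwBN h
      · rw [phi_append, phi_cons, phi_cons, phiX, phiS, hwB]
        have hXS : (-1 : M2) * (Sm * B) = (-Sm) * B := by
          simp [Matrix.neg_mul]
        rw [hXS]
        have hSB : (-Sm) * B = !![a + k*c, b + k*d; c, d] := by
          rw [hB]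
          show (-(!![0,-1;1,0]:M2)) * _ = _
          norm_num [Matrix.mul_fin_two]
        rw [hSB]
        have hTk : Tmat (-k) * !![a + k*c, b + k*d; c, d] = !![a, b; c, d] := by
          rw [Tmat]
          ext i j; fin_cases i <;> fin_cases j <;>
            simp [Matrix.mul_fin_two] <;> ring
        rw [phi_wordT, hTk]
        exact hA.symm

lemma head_mkCore_zero (bs : List Bool) (e : Bool) :
    mkCore 0 bs e = [] ∨ ∃ t, mkCore 0 bs e = S :: t := by
  cases bs with
  | nil =>
    cases e
    · left; rw [mkCore_nil]; rfl
    · right; exact ⟨[], by rw [mkCore_nil]; rfl⟩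
  | cons b bs => right; exact ⟨_, mkCore_zero_cons b bs e⟩

lemma mem_mkCore : ∀ (a : ℕ) (bs : List Bool) (e : Bool) (l : Alph),
    l ∈ mkCore a bs e → l = S ∨ l = R := by
  intro a bs e
  induction a, bs, e using mkCore.induct with
  | case1 a bs e ih =>
    intro l hl
    rw [mkCore_succ] at hl
    rcases List.mem_cons.mp hl with rfl | hl
    · right; rfl
    · exact ih l hl
  | case2 b bs e ih =>
    intro l hl
    rw [mkCore_zero_cons] at hl
    rcases List.mem_cons.mp hl with rfl | hl
    · left; rfl
    · exact ih l hl
  | case3 =>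
    intro l hl
    rw [mkCore_nil] at hl
    simp at hl
    exact Or.inl hl
  | case4 =>
    rename_i he
    intro l hl
    rw [mkCore_nil, if_neg he] at hl
    simp at hl

lemma noSS_mkCore : ∀ (a : ℕ) (bs : List Bool) (e : Bool),
    ¬ ([S, S] <:+: mkCore a bs e) := by
  intro a bs e
  induction a, bs, e using mkCore.induct with
  | case1 a bs e ih =>
    rw [mkCore_succ, List.infix_cons_iff]
    rintro (hpre | hinf)
    · rcases hpre with ⟨t, ht⟩; simp at ht
    · exact ih hinf
  | case2 b bs e ih =>
    rw [mkCore_zero_cons, List.infix_cons_iff]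
    rintro (hpre | hinf)
    · have : mkCore (if b then 2 else 1) bs e = R :: mkCore (if b then 1 else 0) bs e := by
        cases b <;> simp <;> rw [mkCore_succ]
      rw [this] at hpre
      rcases hpre with ⟨t, ht⟩; simp at ht
    · exact ih hinf
  | case3 =>
    rw [mkCore_nil]
    intro h
    have := h.length_le
    simp at this
  | case4 =>
    rename_i he
    rw [mkCore_nil, if_neg he]
    intro h
    rw [List.infix_nil] at h
    simp at h

lemma noRR_prefix_mkCore (a : ℕ) (bs : List Bool) (e : Bool) (ha : a ≤ 1) :
    ¬ ([R, R] <+: mkCore a bs e) := by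
  intro hpre
  interval_cases a
  · rcases head_mkCore_zero bs e with h | ⟨t, h⟩ <;> rw [h] at hpre <;>
      rcases hpre with ⟨u, hu⟩ <;> simp at hu
  · have h1 : mkCore 1 bs e = R :: mkCore 0 bs e := mkCore_succ 0 bs e
    rw [h1] at hpre
    rcases head_mkCore_zero bs e with h | ⟨t, h⟩ <;> rw [h] at hpre <;>
      rcases hpre with ⟨u, hu⟩ <;> simp at hu

lemma noRRR_mkCore : ∀ (a : ℕ) (bs : List Bool) (e : Bool), a ≤ 2 →
    ¬ ([R, R, R] <:+: mkCore a bs e) := by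
  intro a bs e
  induction a, bs, e using mkCore.induct with
  | case1 a bs e ih =>
    intro ha
    rw [mkCore_succ, List.infix_cons_iff]
    rintro (hpre | hinf)
    · rcases hpre with ⟨t, ht⟩
      simp only [List.cons_append, List.nil_append] at ht
      injection ht with _ ht2
      exact noRR_prefix_mkCore a bs e (by omega) ⟨t, ht2⟩
    · exact ih (by omega) hinf
  | case2 b bs e ih =>
    intro _
    rw [mkCore_zero_cons, List.infix_cons_iff]
    rintro (hpre | hinf)
    · rcases hpre with ⟨t, ht⟩; simp at ht
    · exact ih (by cases b <;> norm_num) hinf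
  | case3 =>
    intro _
    rw [mkCore_nil]
    intro h
    have := h.length_le
    simp at this
  | case4 =>
    rename_i he
    intro _
    rw [mkCore_nil, if_neg he]
    intro h
    rw [List.infix_nil] at h
    simp at h

lemma canWord_tt (a : ℕ) (bs : List Bool) (e : Bool) :
    canWord true true a bs e = N :: X :: mkCore a bs e := rfl
lemma canWord_tf (a : ℕ) (bs : List Bool) (e : Bool) :
    canWord true false a bs e = N :: mkCore a bs e := rfl
lemma canWord_ft (a : ℕ) (bs : List Bool) (e : Bool) :
    canWord false true a bs e = X :: mkCore a bs e := rfl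
lemma canWord_ff (a : ℕ) (bs : List Bool) (e : Bool) :
    canWord false false a bs e = mkCore a bs e := rfl

lemma not_infix_cons_of {p : List Alph} {x : Alph} {t : List Alph}
    (hpre : ¬ p <+: x :: t) (hinf : ¬ p <:+: t) : ¬ p <:+: x :: t := by
  rw [List.infix_cons_iff]
  rintro (h | h)
  · exact hpre h
  · exact hinf h

lemma canonical_canWord (d g : Bool) (a : ℕ) (bs : List Bool) (e : Bool) (ha : a ≤ 2) :
    Canonical (canWord d g a bs e) := by
  have hSS := noSS_mkCore a bs e
  have hRRR := noRRR_mkCore a bs e ha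
  have hmem := mem_mkCore a bs e
  refine ⟨?_, ?_, ?_, ?_⟩
  · -- no SS
    cases d <;> cases g <;>
      simp only [canWord_tt, canWord_tf, canWord_ft, canWord_ff] <;>
      [exact hSS;
       exact not_infix_cons_of (by rintro ⟨u, hu⟩; simp at hu) hSS;
       exact not_infix_cons_of (by rintro ⟨u, hu⟩; simp at hu) hSS;
       exact not_infix_cons_of (by rintro ⟨u, hu⟩; simp at hu)
         (not_infix_cons_of (by rintro ⟨u, hu⟩; simp at hu) hSS)]
  · -- no RRR
    cases d <;> cases g <;>
      simp only [canWord_tt, canWord_tf, canWord_ft, canWord_ff] <;>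
      [exact hRRR;
       exact not_infix_cons_of (by rintro ⟨u, hu⟩; simp at hu) hRRR;
       exact not_infix_cons_of (by rintro ⟨u, hu⟩; simp at hu) hRRR;
       exact not_infix_cons_of (by rintro ⟨u, hu⟩; simp at hu)
         (not_infix_cons_of (by rintro ⟨u, hu⟩; simp at hu) hRRR)]
  · -- N only at position 0
    intro i hi
    cases d <;> cases g
    · -- ff : word is mkCore
      exact absurd (hmem N (by rw [← hi]; exact List.get_mem _ _)) (by simp)
    · -- f t : X :: core
      rcases i with ⟨iv, hlt⟩
      cases iv with
      | zero => simp [canWord_ft] at hi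
      | succ j =>
        have hi2 : (mkCore a bs e).get ⟨j, Nat.lt_of_succ_lt_succ hlt⟩ = N := by
          rw [← hi]; exact (List.get_cons_succ).symm
        exact absurd (hmem N (by rw [← hi2]; exact List.get_mem _ _)) (by simp)
    · -- t f : N :: core
      rcases i with ⟨iv, hlt⟩
      cases iv with
      | zero => rfl
      | succ j =>
        have hi2 : (mkCore a bs e).get ⟨j, Nat.lt_of_succ_lt_succ hlt⟩ = N := by
          rw [← hi]; exact (List.get_cons_succ).symm
        exact absurd (hmem N (by rw [← hi2]; exact List.get_mem _ _)) (by simp)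
    · -- t t : N :: X :: core
      rcases i with ⟨iv, hlt⟩
      cases iv with
      | zero => rfl
      | succ j =>
        cases j with
        | zero => simp [canWord_tt] at hi
        | succ j2 =>
          have hi2 : (mkCore a bs e).get
              ⟨j2, Nat.lt_of_succ_lt_succ (Nat.lt_of_succ_lt_succ hlt)⟩ = N := by
            rw [← hi]; exact ((List.get_cons_succ).trans (List.get_cons_succ)).symm
          exact absurd (hmem N (by rw [← hi2]; exact List.get_mem _ _)) (by simp)
  · -- X at position 0, or position 1 after N
    intro i hi
    cases d <;> cases g
    · exact absurd (hmem X (by rw [← hi]; exact List.get_mem _ _)) (by simp)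
    · rcases i with ⟨iv, hlt⟩
      cases iv with
      | zero => exact Or.inl rfl
      | succ j =>
        have hi2 : (mkCore a bs e).get ⟨j, Nat.lt_of_succ_lt_succ hlt⟩ = X := by
          rw [← hi]; exact (List.get_cons_succ).symm
        exact absurd (hmem X (by rw [← hi2]; exact List.get_mem _ _)) (by simp)
    · rcases i with ⟨iv, hlt⟩
      cases iv with
      | zero => simp [canWord_tf] at hi
      | succ j =>
        have hi2 : (mkCore a bs e).get ⟨j, Nat.lt_of_succ_lt_succ hlt⟩ = X := by
          rw [← hi]; exact (List.get_cons_succ).symm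
        exact absurd (hmem X (by rw [← hi2]; exact List.get_mem _ _)) (by simp)
    · rcases i with ⟨iv, hlt⟩
      cases iv with
      | zero => simp [canWord_tt] at hi
      | succ j =>
        cases j with
        | zero =>
          right
          constructor
          · rfl
          · rfl
        | succ j2 =>
          have hi2 : (mkCore a bs e).get
              ⟨j2, Nat.lt_of_succ_lt_succ (Nat.lt_of_succ_lt_succ hlt)⟩ = X := by
            rw [← hi]; exact ((List.get_cons_succ).trans (List.get_cons_succ)).symm
          exact absurd (hmem X (by rw [← hi2]; exact List.get_mem _ _)) (by simp)

lemma infix_of_infix_tail {p : List Alph} {x : Alph} {t : List Alph}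
    (h : p <:+: t) : p <:+: x :: t := by
  obtain ⟨s, u, rfl⟩ := h
  exact ⟨x :: s, u, rfl⟩

lemma parse_core : ∀ w : List Alph, (∀ l ∈ w, l = S ∨ l = R) →
    ¬ ([S, S] <:+: w) → ¬ ([R, R, R] <:+: w) →
    ∃ a bs e, a ≤ 2 ∧ w = mkCore a bs e := by
  intro w
  induction w with
  | nil =>
    intro _ _ _
    exact ⟨0, [], false, by norm_num, by rw [mkCore_nil]; rfl⟩
  | cons l t ih =>
    intro hmem hss hrrr
    have hmt : ∀ x ∈ t, x = S ∨ x = R := fun x hx => hmem x (List.mem_cons_of_mem _ hx)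
    have hsst : ¬ [S, S] <:+: t := fun h => hss (infix_of_infix_tail h)
    have hrrrt : ¬ [R, R, R] <:+: t := fun h => hrrr (infix_of_infix_tail h)
    obtain ⟨a, bs, e, ha, rfl⟩ := ih hmt hsst hrrrt
    rcases hmem l List.mem_cons_self with rfl | rfl
    · -- l = S
      cases a with
      | succ a' =>
        refine ⟨0, decide (a' + 1 = 2) :: bs, e, by norm_num, ?_⟩
        rw [mkCore_zero_cons]
        have h12 : a' + 1 = 1 ∨ a' + 1 = 2 := by omega
        rcases h12 with h | h <;> simp [h]
      | zero =>
        cases hbs : bs with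
        | cons b bs' =>
          exfalso
          subst hbs
          rw [mkCore_zero_cons] at hss
          exact hss (List.IsPrefix.isInfix ⟨_, rfl⟩)
        | nil =>
          subst hbs
          cases e with
          | true =>
            exfalso
            rw [mkCore_nil] at hss
            simp at hss
          | false =>
            refine ⟨0, [], true, by norm_num, ?_⟩
            rw [mkCore_nil, mkCore_nil]
            simp
    · -- l = R
      have ha1 : a ≤ 1 := by
        by_contra hgt
        have h2 : a = 2 := by omega
        subst h2
        apply hrrr
        have : mkCore 2 bs e = R :: R :: mkCore 0 bs e := by
          rw [show (2:ℕ) = 1 + 1 from rfl, mkCore_succ, show (1:ℕ) = 0 + 1 from rfl,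
            mkCore_succ]
        rw [this]
        exact List.IsPrefix.isInfix ⟨_, rfl⟩
      exact ⟨a + 1, bs, e, by omega, by rw [mkCore_succ]⟩

lemma get_of_mem_tail {l x : Alph} {t : List Alph} (hx : x ∈ t) :
    ∃ (j : ℕ) (h : j + 1 < (l :: t).length), (l :: t).get ⟨j + 1, h⟩ = x := by
  obtain ⟨⟨j, hj⟩, hg⟩ := List.mem_iff_get.mp hx
  exact ⟨j, Nat.succ_lt_succ hj, by rw [List.get_cons_succ]; exact hg⟩

lemma tail_pure {l : Alph} {t : List Alph} (hl : l ≠ N)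
    (h3 : ∀ i : Fin (l::t).length, (l::t).get i = N → (i : ℕ) = 0)
    (h4 : ∀ i : Fin (l::t).length, (l::t).get i = X →
      (i : ℕ) = 0 ∨ ((i : ℕ) = 1 ∧
        (l::t).get ⟨0, Nat.lt_of_le_of_lt (Nat.zero_le _) i.isLt⟩ = N)) :
    ∀ x ∈ t, x = S ∨ x = R := by
  intro x hx
  obtain ⟨j, hj, hg⟩ := get_of_mem_tail (l := l) hx
  cases x with
  | X =>
    rcases h4 ⟨j+1, hj⟩ hg with h0 | ⟨_, hN⟩
    · simp at h0
    · exact absurd hN hl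
  | N => exact absurd (h3 ⟨j+1, hj⟩ hg) (by simp)
  | S => exact Or.inl rfl
  | R => exact Or.inr rfl

lemma tail_pure2 {t2 : List Alph}
    (h3 : ∀ i : Fin (N::X::t2).length, (N::X::t2).get i = N → (i : ℕ) = 0)
    (h4 : ∀ i : Fin (N::X::t2).length, (N::X::t2).get i = X →
      (i : ℕ) = 0 ∨ ((i : ℕ) = 1 ∧
        (N::X::t2).get ⟨0, Nat.lt_of_le_of_lt (Nat.zero_le _) i.isLt⟩ = N)) :
    ∀ x ∈ t2, x = S ∨ x = R := by
  intro x hx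
  obtain ⟨j, hj, hg⟩ := get_of_mem_tail (l := X) hx
  have hj2 : j + 1 + 1 < (N::X::t2).length := Nat.succ_lt_succ hj
  have hg2 : (N::X::t2).get ⟨j + 1 + 1, hj2⟩ = x := by
    rw [List.get_cons_succ]; exact hg
  cases x with
  | X =>
    rcases h4 ⟨j+1+1, hj2⟩ hg2 with h0 | ⟨h1', _⟩
    · simp at h0
    · simp at h1'
  | N => exact absurd (h3 ⟨j+1+1, hj2⟩ hg2) (by simp)
  | S => exact Or.inl rfl
  | R => exact Or.inr rfl

lemma parse_canonical {w : List Alph} (hcan : Canonical w) :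
    ∃ d g a bs e, a ≤ 2 ∧ w = canWord d g a bs e := by
  obtain ⟨h1, h2, h3, h4⟩ := hcan
  rcases w with _ | ⟨l, t⟩
  · exact ⟨false, false, 0, [], false, by norm_num, by rw [canWord_ff, mkCore_nil]; rfl⟩
  cases l with
  | X =>
    have hmem := tail_pure (by simp) h3 h4
    have hss : ¬[S,S] <:+: t := fun h => h1 (infix_of_infix_tail h)
    have hrrr : ¬[R,R,R] <:+: t := fun h => h2 (infix_of_infix_tail h)
    obtain ⟨a, bs, e, ha, rfl⟩ := parse_core t hmem hss hrrr
    exact ⟨false, true, a, bs, e, ha, by rw [canWord_ft]⟩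
  | S =>
    have hmem : ∀ x ∈ S :: t, x = S ∨ x = R := by
      intro x hx
      rcases List.mem_cons.mp hx with rfl | hx
      · exact Or.inl rfl
      · exact tail_pure (by simp) h3 h4 x hx
    obtain ⟨a, bs, e, ha, hw⟩ := parse_core _ hmem h1 h2
    exact ⟨false, false, a, bs, e, ha, by rw [canWord_ff, ← hw]⟩
  | R =>
    have hmem : ∀ x ∈ R :: t, x = S ∨ x = R := by
      intro x hx
      rcases List.mem_cons.mp hx with rfl | hx
      · exact Or.inr rfl
      · exact tail_pure (by simp) h3 h4 x hx
    obtain ⟨a, bs, e, ha, hw⟩ := parse_core _ hmem h1 h2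
    exact ⟨false, false, a, bs, e, ha, by rw [canWord_ff, ← hw]⟩
  | N =>
    rcases t with _ | ⟨l2, t2⟩
    · exact ⟨true, false, 0, [], false, by norm_num, by rw [canWord_tf, mkCore_nil]; rfl⟩
    cases l2 with
    | N =>
      have hget : (N::N::t2 : List Alph).get ⟨1, by simp⟩ = N := rfl
      have := h3 ⟨1, by simp⟩ hget
      simp at this
    | X =>
      have hmem := tail_pure2 h3 h4
      have hss : ¬[S,S] <:+: t2 :=
        fun h => h1 (infix_of_infix_tail (infix_of_infix_tail h))
      have hrrr : ¬[R,R,R] <:+: t2 :=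
        fun h => h2 (infix_of_infix_tail (infix_of_infix_tail h))
      obtain ⟨a, bs, e, ha, rfl⟩ := parse_core t2 hmem hss hrrr
      exact ⟨true, true, a, bs, e, ha, by rw [canWord_tt]⟩
    | S =>
      have hmem : ∀ x ∈ S :: t2, x = S ∨ x = R := by
        intro x hx
        rcases List.mem_cons.mp hx with rfl | hx
        · exact Or.inl rfl
        · -- x in t2, index ≥ 2 in w
          obtain ⟨j, hj, hg⟩ := get_of_mem_tail (l := S) hx
          have hj2 : j + 1 + 1 < (N::S::t2).length := Nat.succ_lt_succ hj
          have hg2 : (N::S::t2).get ⟨j + 1 + 1, hj2⟩ = x := by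
            rw [List.get_cons_succ]; exact hg
          cases x with
          | X =>
            rcases h4 ⟨j+1+1, hj2⟩ hg2 with h0 | ⟨h1', _⟩
            · simp at h0
            · simp at h1'
          | N => exact absurd (h3 ⟨j+1+1, hj2⟩ hg2) (by simp)
          | S => exact Or.inl rfl
          | R => exact Or.inr rfl
      have hss : ¬[S,S] <:+: (S :: t2) := fun h => h1 (infix_of_infix_tail h)
      have hrrr : ¬[R,R,R] <:+: (S :: t2) := fun h => h2 (infix_of_infix_tail h)
      obtain ⟨a, bs, e, ha, hw⟩ := parse_core _ hmem hss hrrr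
      exact ⟨true, false, a, bs, e, ha, by rw [canWord_tf, ← hw]⟩
    | R =>
      have hmem : ∀ x ∈ R :: t2, x = S ∨ x = R := by
        intro x hx
        rcases List.mem_cons.mp hx with rfl | hx
        · exact Or.inr rfl
        · obtain ⟨j, hj, hg⟩ := get_of_mem_tail (l := R) hx
          have hj2 : j + 1 + 1 < (N::R::t2).length := Nat.succ_lt_succ hj
          have hg2 : (N::R::t2).get ⟨j + 1 + 1, hj2⟩ = x := by
            rw [List.get_cons_succ]; exact hg
          cases x with
          | X =>
            rcases h4 ⟨j+1+1, hj2⟩ hg2 with h0 | ⟨h1', _⟩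
            · simp at h0
            · simp at h1'
          | N => exact absurd (h3 ⟨j+1+1, hj2⟩ hg2) (by simp)
          | S => exact Or.inl rfl
          | R => exact Or.inr rfl
      have hss : ¬[S,S] <:+: (R :: t2) := fun h => h1 (infix_of_infix_tail h)
      have hrrr : ¬[R,R,R] <:+: (R :: t2) := fun h => h2 (infix_of_infix_tail h)
      obtain ⟨a, bs, e, ha, hw⟩ := parse_core _ hmem hss hrrr
      exact ⟨true, false, a, bs, e, ha, by rw [canWord_tf, ← hw]⟩

lemma neg_one_mul_sg (p : Bool) (Z : M2) : (-1 : M2) * (sg p * Z) = sg (!p) * Z := by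
  cases p <;> simp [sg]

lemma phi_canWord (d g : Bool) (a : ℕ) (bs : List Bool) (e : Bool) :
    phi (canWord d g a bs e) =
      (if d then Nm else 1) *
        (sg (xor g (decide (bs.length % 2 = 1))) * (Rm ^ a * (Wm bs * Se e))) := by
  have hmk : phi (mkCore a bs e) =
      sg (decide (bs.length % 2 = 1)) * (Rm ^ a * (Wm bs * Se e)) := by
    rw [phi_mkCore, ← Matrix.mul_assoc, ← sg_comm, Matrix.mul_assoc]
  cases d <;> cases g
  · rw [canWord_ff, hmk]; simp
  · rw [canWord_ft, phi_cons, phiX, hmk, neg_one_mul_sg]; simp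
  · rw [canWord_tf, phi_cons, phiN, hmk]; simp
  · rw [canWord_tt, phi_cons, phi_cons, phiX, phiN, hmk, neg_one_mul_sg]; simp

lemma det_sg (g : Bool) : (sg g).det = 1 := by
  cases g <;> simp [sg, Matrix.det_neg]
lemma det_Rm : Rm.det = 1 := by rw [Rm, Matrix.det_fin_two_of]; norm_num
lemma det_Sm : Sm.det = 1 := by rw [Sm, Matrix.det_fin_two_of]; norm_num
lemma det_Nm : Nm.det = -1 := by rw [Nm, Matrix.det_fin_two_of]; norm_num
lemma det_Se (e : Bool) : (Se e).det = 1 := by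
  cases e <;> simp [Se, det_Sm]
lemma det_Wm (bs : List Bool) : (Wm bs).det = 1 := by
  obtain ⟨h1, h2, h3, h4, h5⟩ := pos_Wm bs
  rw [Matrix.eta_fin_two (Wm bs), Matrix.det_fin_two_of]
  exact h5

lemma Nm_cancel {A B : M2} (h : Nm * A = Nm * B) : A = B := by
  calc A = (Nm * Nm) * A := by rw [NN, Matrix.one_mul]
  _ = Nm * (Nm * B) := by rw [Matrix.mul_assoc, h]
  _ = (Nm * Nm) * B := by rw [Matrix.mul_assoc]
  _ = B := by rw [NN, Matrix.one_mul]

lemma canon_unique {v w : List Alph} (hv : Canonical v) (hw : Canonical w)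
    (h : phi v = phi w) : v = w := by
  obtain ⟨d, g, a, bs, e, ha, rfl⟩ := parse_canonical hv
  obtain ⟨d', g', a', bs', e', ha', rfl⟩ := parse_canonical hw
  rw [phi_canWord, phi_canWord] at h
  have hdet := congrArg Matrix.det h
  simp only [Matrix.det_mul, det_sg, det_Se, det_Wm, det_Rm, Matrix.det_pow,
    one_pow, one_mul, mul_one] at hdet
  have hd : d = d' := by
    cases d <;> cases d' <;> simp [det_Nm, Matrix.det_one] at hdet <;> first | rfl | omega
  subst hd
  have h2 : sg (xor g (decide (bs.length % 2 = 1))) * (Rm ^ a * (Wm bs * Se e)) =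
      sg (xor g' (decide (bs'.length % 2 = 1))) * (Rm ^ a' * (Wm bs' * Se e')) := by
    cases d
    · simpa using h
    · simp only [if_true] at h
      exact Nm_cancel h
  obtain ⟨hG, hA, hBS, hE⟩ := inj_main _ _ _ _ _ _ ha ha' _ _ h2
  subst hA; subst hBS; subst hE
  have hg : g = g' := by
    cases g <;> cases g' <;> simp_all
  rw [hg]

theorem exists_unique_canonical_word_GL' (A : M2) (hA : IsGL A) :
    ∃! w : List Alph, Canonical w ∧ phi w = A := by
  have hex : ∃ d g a bs e, a ≤ 2 ∧ phi (canWord d g a bs e) = A := by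
    rcases hA with h1 | h1
    · obtain ⟨w0, hN, hw0⟩ := exists_word_det_one (A 1 0).natAbs A h1 rfl
      have hC : ClassC A := hw0 ▸ classC_word w0 hN
      obtain ⟨g0, a, bs, e, ha, hval⟩ := hC
      refine ⟨false, xor g0 (decide (bs.length % 2 = 1)), a, bs, e, ha, ?_⟩
      rw [phi_canWord]
      have hxx : xor (xor g0 (decide (bs.length % 2 = 1))) (decide (bs.length % 2 = 1)) = g0 := by
        cases g0 <;> cases (decide (bs.length % 2 = 1)) <;> rfl
      rw [hxx]
      simp [← hval]
    · have hdet' : (Nm * A).det = 1 := by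
        rw [Matrix.det_mul, det_Nm, h1]; norm_num
      obtain ⟨w0, hN, hw0⟩ := exists_word_det_one ((Nm * A) 1 0).natAbs _ hdet' rfl
      have hC : ClassC (Nm * A) := hw0 ▸ classC_word w0 hN
      obtain ⟨g0, a, bs, e, ha, hval⟩ := hC
      refine ⟨true, xor g0 (decide (bs.length % 2 = 1)), a, bs, e, ha, ?_⟩
      rw [phi_canWord]
      have hxx : xor (xor g0 (decide (bs.length % 2 = 1))) (decide (bs.length % 2 = 1)) = g0 := by
        cases g0 <;> cases (decide (bs.length % 2 = 1)) <;> rfl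
      rw [hxx, if_pos rfl, ← hval]
      exact Nm_cancel (by rw [← Matrix.mul_assoc, NN, Matrix.one_mul])
  obtain ⟨d, g, a, bs, e, ha, hphi⟩ := hex
  refine ⟨canWord d g a bs e, ⟨canonical_canWord d g a bs e ha, hphi⟩, ?_⟩
  intro y hy
  exact canon_unique hy.1 (canonical_canWord d g a bs e ha) (hy.2.trans hphi.symm)

end CanProof

/-- Every matrix in GL(2,ℤ) is represented by exactly one canonical word. -/
theorem exists_unique_canonical_word_GL (A : M2) (hA : IsGL A) :
    ∃! w : List Alph, Canonical w ∧ phi w = A :=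
  CanProof.exists_unique_canonical_word_GL' A hA
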